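/- arXiv:1803.06677 — 2 statements merged into one kernel-verified Lean document; each statement's English description precedes it below -/
import Mathlib

section
/- Let M, N be natural numbers with 1 ≤ M ≤ N, let a_1,…,a_M > 0 and b_0, b_1,…,b_N > 0 be real numbers, fix i ∈ {1,…,M}, and let q be a complex number with Re q > −b_0. For a real parameter c > −b_0 (in place of b_0) define η_{M−1,N}(c; q) = exp( ∫_0^∞ (e^{−tq} − 1) e^{−c t} ∏_{j=1}^N (1 − e^{−b_j t}) / ∏_{l ≠ i} (1 − e^{−a_l t}) dt/t ), where the denominator product runs over the M−1 indices l ∈ {1,…,M} with l ≠ i. Then exp( ∫_0^∞ (e^{−tq} − 1) e^{−b_0 t} ∏_{j=1}^N (1 − e^{−b_j t}) / ∏_{l=1}^M (1 − e^{−a_l t}) dt/t ) = ∏_{k=0}^∞ η_{M−1,N}(b_0 + k a_i; q), with the infinite product over k convergent. -/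
open MeasureTheory Set Finset
open scoped ENNReal NNReal

lemma oneSubExp_pos {x : ℝ} (hx : 0 < x) : 0 < 1 - Real.exp (-x) :=
  sub_pos.mpr (Real.exp_lt_one_iff.mpr (neg_lt_zero.mpr hx))

lemma oneSubExp_le_one (x : ℝ) : 1 - Real.exp x ≤ 1 := by
  have := Real.exp_pos x; linarith

lemma oneSubExp_le (x : ℝ) : 1 - Real.exp (-x) ≤ x := by
  have := Real.add_one_le_exp (-x); linarith

lemma mul_exp_le_oneSubExp (x : ℝ) : x * Real.exp (-x) ≤ 1 - Real.exp (-x) := by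
  have h1 := Real.add_one_le_exp x
  have h2 := Real.exp_pos x
  have h3 : Real.exp (-x) = (Real.exp x)⁻¹ := Real.exp_neg x
  have h4 : Real.exp x * (Real.exp x)⁻¹ = 1 := mul_inv_cancel₀ (ne_of_gt h2)
  rw [h3]
  have h5 : (0:ℝ) < (Real.exp x)⁻¹ := inv_pos.mpr h2
  nlinarith

lemma norm_mul_ofReal_div {z : ℂ} {x t : ℝ} (hx : 0 ≤ x) (ht : 0 < t) :
    ‖z * (x : ℂ) / (t : ℂ)‖ = ‖z‖ * x / t := by
  rw [norm_div, norm_mul, Complex.norm_real, Complex.norm_real, Real.norm_eq_abs,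
    Real.norm_eq_abs, abs_of_nonneg hx, abs_of_pos ht]

lemma norm_cexp_sub_one_le_small (q : ℂ) {t : ℝ} (ht0 : 0 < t) (ht1 : t ≤ 1) :
    ‖Complex.exp (-(t:ℂ)*q) - 1‖ ≤ (2*‖q‖ + (Real.exp ‖q‖ + 1)*(1+‖q‖)) * t := by
  have hq0 : (0:ℝ) ≤ ‖q‖ := norm_nonneg q
  have hnormz : ‖-(t:ℂ)*q‖ = t * ‖q‖ := by
    rw [norm_mul, norm_neg, Complex.norm_real, Real.norm_eq_abs, abs_of_pos ht0]
  have hexp1 : (0:ℝ) < Real.exp ‖q‖ := Real.exp_pos _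
  by_cases h : t * ‖q‖ ≤ 1
  · have hb := Complex.norm_exp_sub_one_le (x := -(t:ℂ)*q)
      (by rw [hnormz]; exact h)
    rw [hnormz] at hb
    nlinarith [mul_pos (mul_pos (by linarith : (0:ℝ) < Real.exp ‖q‖ + 1)
      (by linarith : (0:ℝ) < 1+‖q‖)) ht0]
  · push_neg at h
    have h1 : ‖Complex.exp (-(t:ℂ)*q) - 1‖ ≤ Real.exp ‖q‖ + 1 := by
      have h2 : ‖Complex.exp (-(t:ℂ)*q)‖ ≤ Real.exp ‖q‖ := by
        rw [Complex.norm_exp]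
        apply Real.exp_le_exp.mpr
        have hre : (-(t:ℂ)*q).re = -(t * q.re) := by
          simp [Complex.mul_re]
        rw [hre]
        have := Complex.abs_re_le_norm q
        have h3 : -(t * q.re) ≤ t * ‖q‖ := by nlinarith [abs_le.mp this]
        nlinarith
      calc ‖Complex.exp (-(t:ℂ)*q) - 1‖ ≤ ‖Complex.exp (-(t:ℂ)*q)‖ + ‖(1:ℂ)‖ :=
            norm_sub_le _ _
        _ ≤ Real.exp ‖q‖ + 1 := by rw [norm_one]; linarith
    have h4 : (1:ℝ) ≤ (1 + ‖q‖) * t := by nlinarith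
    calc ‖Complex.exp (-(t:ℂ)*q) - 1‖ ≤ Real.exp ‖q‖ + 1 := h1
      _ ≤ (Real.exp ‖q‖ + 1) * ((1 + ‖q‖) * t) := le_mul_of_one_le_right (by linarith) h4
      _ ≤ (2*‖q‖ + (Real.exp ‖q‖ + 1)*(1+‖q‖)) * t := by nlinarith

lemma norm_cexp_sub_one_le (q : ℂ) (t : ℝ) :
    ‖Complex.exp (-(t:ℂ)*q) - 1‖ ≤ Real.exp (-(q.re) * t) + 1 := by
  have h2 : ‖Complex.exp (-(t:ℂ)*q)‖ = Real.exp (-(q.re) * t) := by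
    rw [Complex.norm_exp]
    congr 1
    simp [Complex.mul_re]
    ring
  calc ‖Complex.exp (-(t:ℂ)*q) - 1‖ ≤ ‖Complex.exp (-(t:ℂ)*q)‖ + ‖(1:ℂ)‖ := norm_sub_le _ _
    _ = Real.exp (-(q.re) * t) + 1 := by rw [norm_one, h2]


section
variable (N : ℕ) (q : ℂ) (b : ℕ → ℝ) (a : ℕ → ℝ)

lemma integrable_aux (hb : ∀ j ∈ Finset.Icc 1 N, 0 < b j)
    (S : Finset ℕ) (hS : ∀ l ∈ S, 0 < a l) (hcard : S.card ≤ N)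
    (c : ℝ) (hc : 0 < c) (hcq : -c < q.re) :
    IntegrableOn (fun t : ℝ => (Complex.exp (-(t:ℂ)*q) - 1) *
      ((Real.exp (-c*t) * (∏ j ∈ Finset.Icc 1 N, (1 - Real.exp (-(b j)*t))) /
        ∏ l ∈ S, (1 - Real.exp (-(a l)*t)) : ℝ) : ℂ) / (t:ℂ)) (Set.Ioi 0) := by
  set P : ℝ → ℝ := fun t => ∏ j ∈ Finset.Icc 1 N, (1 - Real.exp (-(b j)*t)) with hP
  set D : ℝ → ℝ := fun t => ∏ l ∈ S, (1 - Real.exp (-(a l)*t)) with hD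
  set F : ℝ → ℂ := fun t => (Complex.exp (-(t:ℂ)*q) - 1) *
      ((Real.exp (-c*t) * P t / D t : ℝ) : ℂ) / (t:ℂ) with hF
  have hfac : ∀ x t : ℝ, 0 < x → 0 < t → 0 < 1 - Real.exp (-x*t) := by
    intro x t hx ht
    rw [neg_mul]
    exact oneSubExp_pos (mul_pos hx ht)
  have hD0 : ∀ t : ℝ, 0 < t → 0 < D t := fun t ht => prod_pos fun l hl => hfac _ _ (hS l hl) ht
  have hP0 : ∀ t : ℝ, 0 < t → 0 ≤ P t :=
    fun t ht => prod_nonneg fun j hj => (hfac _ _ (hb j hj) ht).le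
  have hP1 : ∀ t : ℝ, 0 < t → P t ≤ 1 := by
    intro t ht
    apply prod_le_one (fun j hj => (hfac _ _ (hb j hj) ht).le)
    intro j hj
    rw [neg_mul]
    exact oneSubExp_le_one _
  -- continuity / measurability
  have hcont : ContinuousOn F (Set.Ioi 0) := by
    apply ContinuousOn.div
    · apply ContinuousOn.mul
      · apply Continuous.continuousOn
        exact (Complex.continuous_exp.comp (by fun_prop)).sub continuous_const
      · apply Complex.continuous_ofReal.comp_continuousOn
        apply ContinuousOn.div
        · apply Continuous.continuousOn
          apply Continuous.mul (by fun_prop)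
          exact continuous_finset_prod _ fun j _ => by fun_prop
        · exact (continuous_finset_prod _ fun l _ => by fun_prop).continuousOn
        · exact fun t ht => ne_of_gt (hD0 t ht)
    · exact Complex.continuous_ofReal.continuousOn
    · exact fun t ht => Complex.ofReal_ne_zero.mpr (ne_of_gt ht)
  have hmeas : AEStronglyMeasurable F (volume.restrict (Set.Ioi 0)) :=
    hcont.aestronglyMeasurable measurableSet_Ioi
  -- norm formula
  have hnorm : ∀ t : ℝ, 0 < t →
      ‖F t‖ = ‖Complex.exp (-(t:ℂ)*q) - 1‖ * (Real.exp (-c*t) * P t / D t) / t := by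
    intro t ht
    exact norm_mul_ofReal_div
      (div_nonneg (mul_nonneg (Real.exp_pos _).le (hP0 t ht)) (hD0 t ht).le) ht
  rw [← Set.Ioc_union_Ioi_eq_Ioi (zero_le_one)]
  apply IntegrableOn.union
  · -- on Ioc 0 1 : bounded by a constant
    set Cb : ℝ := ∏ j ∈ Finset.Icc 1 N, b j with hCb
    set Ca : ℝ := ∏ l ∈ S, (a l * Real.exp (-(a l))) with hCa
    have hCb0 : 0 < Cb := prod_pos hb
    have hCa0 : 0 < Ca := prod_pos fun l hl => mul_pos (hS l hl) (Real.exp_pos _)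
    have hbound : ∀ t ∈ Set.Ioc (0:ℝ) 1, ‖F t‖ ≤
        (2*‖q‖ + (Real.exp ‖q‖ + 1)*(1+‖q‖)) * (Cb / Ca) := by
      rintro t ⟨ht0, ht1⟩
      set C0 : ℝ := 2*‖q‖ + (Real.exp ‖q‖ + 1)*(1+‖q‖) with hC0def
      have hC00 : 0 ≤ C0 := by positivity
      have hPb : P t ≤ Cb * t ^ S.card := by
        calc P t ≤ ∏ j ∈ Finset.Icc 1 N, (b j * t) := by
              apply prod_le_prod (fun j hj => (hfac _ _ (hb j hj) ht0).le)
              intro j hj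
              rw [neg_mul]
              exact oneSubExp_le _
          _ = Cb * t ^ N := by rw [prod_mul_distrib, prod_const, Nat.card_Icc]; simp; exact Or.inl hCb.symm
          _ ≤ Cb * t ^ S.card := by
              apply mul_le_mul_of_nonneg_left _ hCb0.le
              exact pow_le_pow_of_le_one ht0.le ht1 hcard
      have hDb : Ca * t ^ S.card ≤ D t := by
        calc Ca * t ^ S.card = ∏ l ∈ S, (a l * Real.exp (-(a l)) * t) := by
              rw [prod_mul_distrib, prod_const]
          _ ≤ D t := by
              apply prod_le_prod
              · intro l hl
                have := hS l hl
                positivity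
              · intro l hl
                have hal := hS l hl
                have h1 : a l * t * Real.exp (-(a l * t)) ≤ 1 - Real.exp (-(a l * t)) :=
                  mul_exp_le_oneSubExp _
                have h2 : Real.exp (-(a l)) ≤ Real.exp (-(a l * t)) := by
                  apply Real.exp_le_exp.mpr
                  nlinarith
                rw [neg_mul]
                nlinarith [mul_pos hal ht0]
      have hPD : P t / D t ≤ Cb / Ca := by
        have h1 : P t / D t ≤ Cb * t ^ S.card / (Ca * t ^ S.card) :=
          div_le_div₀ (by positivity) hPb (by positivity) hDb
        rwa [mul_div_mul_right _ _ (pow_ne_zero _ (ne_of_gt ht0))] at h1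
      have hec : Real.exp (-c*t) ≤ 1 := by
        rw [Real.exp_le_one_iff]
        nlinarith
      rw [hnorm t ht0]
      have h3 : Real.exp (-c*t) * P t / D t ≤ Cb / Ca := by
        calc Real.exp (-c*t) * P t / D t ≤ 1 * P t / D t := by
              apply (div_le_div_iff_of_pos_right (hD0 t ht0)).mpr
              exact mul_le_mul_of_nonneg_right hec (hP0 t ht0)
          _ = P t / D t := by rw [one_mul]
          _ ≤ Cb / Ca := hPD
      calc ‖Complex.exp (-(t:ℂ)*q) - 1‖ * (Real.exp (-c*t) * P t / D t) / t
          ≤ (C0 * t) * (Cb/Ca) / t := by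
            apply (div_le_div_iff_of_pos_right ht0).mpr
            apply mul_le_mul (norm_cexp_sub_one_le_small q ht0 ht1) h3
              (div_nonneg (mul_nonneg (Real.exp_pos _).le (hP0 t ht0)) (hD0 t ht0).le)
              (by positivity)
        _ = C0 * (Cb/Ca) := by
            rw [mul_right_comm, mul_div_assoc, div_self (ne_of_gt ht0), mul_one]
    apply Integrable.mono' (integrableOn_const (C := (2*‖q‖ + (Real.exp ‖q‖ + 1)*(1+‖q‖)) * (Cb / Ca)) measure_Ioc_lt_top.ne)
      (hmeas.mono_measure (Measure.restrict_mono Set.Ioc_subset_Ioi_self le_rfl))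
    exact (ae_restrict_iff' measurableSet_Ioc).2 (ae_of_all _ hbound)
  · -- on Ioi 1 : dominated by exponentials
    set d : ℝ := ∏ l ∈ S, (1 - Real.exp (-(a l))) with hdd
    have hd0 : 0 < d := prod_pos fun l hl => oneSubExp_pos (hS l hl)
    have hint : IntegrableOn
        (fun t : ℝ => (Real.exp (-(q.re + c)*t) + Real.exp (-c*t)) / d) (Set.Ioi 1) := by
      apply Integrable.div_const
      exact (exp_neg_integrableOn_Ioi 1 (by linarith)).add (exp_neg_integrableOn_Ioi 1 hc)
    apply Integrable.mono' hint
      (hmeas.mono_measure (Measure.restrict_mono (Set.Ioi_subset_Ioi zero_le_one) le_rfl))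
    rw [ae_restrict_iff' measurableSet_Ioi]
    apply ae_of_all
    intro t ht
    rw [Set.mem_Ioi] at ht
    have ht0 : (0:ℝ) < t := lt_trans zero_lt_one ht
    have hDd : d ≤ D t := by
      apply prod_le_prod (fun l hl => (oneSubExp_pos (hS l hl)).le)
      intro l hl
      have hal := hS l hl
      have : Real.exp (-(a l)*t) ≤ Real.exp (-(a l)) := by
        apply Real.exp_le_exp.mpr
        nlinarith
      linarith
    have h1 : Real.exp (-c*t) * P t / D t ≤ Real.exp (-c*t) / d := by
      apply div_le_div₀ (Real.exp_pos _).le _ hd0 hDd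
      calc Real.exp (-c*t) * P t ≤ Real.exp (-c*t) * 1 :=
            mul_le_mul_of_nonneg_left (hP1 t ht0) (Real.exp_pos _).le
        _ = Real.exp (-c*t) := mul_one _
    rw [hnorm t ht0]
    have h2 : ‖Complex.exp (-(t:ℂ)*q) - 1‖ ≤ Real.exp (-(q.re)*t) + 1 :=
      norm_cexp_sub_one_le q t
    have h3 : ‖Complex.exp (-(t:ℂ)*q) - 1‖ * (Real.exp (-c*t) * P t / D t) / t
        ≤ (Real.exp (-(q.re)*t) + 1) * (Real.exp (-c*t) / d) := by
      have hnn : 0 ≤ Real.exp (-c*t) * P t / D t :=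
        div_nonneg (mul_nonneg (Real.exp_pos _).le (hP0 t ht0)) (hD0 t ht0).le
      have step : ‖Complex.exp (-(t:ℂ)*q) - 1‖ * (Real.exp (-c*t) * P t / D t)
          ≤ (Real.exp (-(q.re)*t) + 1) * (Real.exp (-c*t) / d) := by
        apply mul_le_mul h2 h1 hnn (by positivity)
      calc ‖Complex.exp (-(t:ℂ)*q) - 1‖ * (Real.exp (-c*t) * P t / D t) / t
          ≤ ‖Complex.exp (-(t:ℂ)*q) - 1‖ * (Real.exp (-c*t) * P t / D t) :=
            div_le_self (mul_nonneg (norm_nonneg _) hnn) ht.le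
        _ ≤ _ := step
    refine h3.trans (le_of_eq ?_)
    rw [show -(q.re + c)*t = -(q.re)*t + -c*t by ring, Real.exp_add]
    field_simp

end

section
variable (M N : ℕ) (q : ℂ) (a b : ℕ → ℝ)

lemma key_hasSum (hM : 1 ≤ M) (hMN : M ≤ N)
    (ha : ∀ l ∈ Finset.Icc 1 M, 0 < a l)
    (hb : ∀ j ∈ Finset.Icc 0 N, 0 < b j)
    (i : ℕ) (hi : i ∈ Finset.Icc 1 M)
    (hq : -(b 0) < q.re) :
    HasSum (fun k : ℕ => ∫ t in Set.Ioi (0:ℝ),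
        (Complex.exp (-(t : ℂ) * q) - 1) *
          ((Real.exp (-(b 0 + k * a i) * t) *
            (∏ j ∈ Finset.Icc 1 N, (1 - Real.exp (-(b j) * t))) /
            ∏ l ∈ (Finset.Icc 1 M).erase i, (1 - Real.exp (-(a l) * t)) : ℝ) : ℂ) / (t : ℂ))
      (∫ t in Set.Ioi (0:ℝ),
        (Complex.exp (-(t : ℂ) * q) - 1) *
          ((Real.exp (-(b 0) * t) *
            (∏ j ∈ Finset.Icc 1 N, (1 - Real.exp (-(b j) * t))) /
            ∏ l ∈ Finset.Icc 1 M, (1 - Real.exp (-(a l) * t)) : ℝ) : ℂ) / (t : ℂ)) := by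
  have hb' : ∀ j ∈ Finset.Icc 1 N, 0 < b j := fun j hj => by
    refine hb j (Finset.mem_Icc.mpr ⟨Nat.zero_le _, (Finset.mem_Icc.mp hj).2⟩)
  have hb0 : 0 < b 0 := hb 0 (Finset.mem_Icc.mpr ⟨le_rfl, Nat.zero_le N⟩)
  have hai : 0 < a i := ha i hi
  have ha' : ∀ l ∈ (Finset.Icc 1 M).erase i, 0 < a l :=
    fun l hl => ha l (Finset.mem_of_mem_erase hl)
  have hcard_full : (Finset.Icc 1 M).card ≤ N := by
    rw [Nat.card_Icc]; omega
  have hcard_sub : ((Finset.Icc 1 M).erase i).card ≤ N :=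
    le_trans (Finset.card_erase_le) hcard_full
  -- integrability
  have hFint : ∀ k : ℕ, IntegrableOn (fun t : ℝ => (Complex.exp (-(t:ℂ)*q) - 1) *
      ((Real.exp (-(b 0 + k * a i)*t) * (∏ j ∈ Finset.Icc 1 N, (1 - Real.exp (-(b j)*t))) /
        ∏ l ∈ (Finset.Icc 1 M).erase i, (1 - Real.exp (-(a l)*t)) : ℝ) : ℂ) / (t:ℂ))
      (Set.Ioi 0) := by
    intro k
    have hk : (0:ℝ) ≤ (k:ℝ) * a i := by positivity
    exact integrable_aux N q b a hb' _ ha' hcard_sub (b 0 + k * a i) (by linarith)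
      (by nlinarith)
  have hGint : IntegrableOn (fun t : ℝ => (Complex.exp (-(t:ℂ)*q) - 1) *
      ((Real.exp (-(b 0)*t) * (∏ j ∈ Finset.Icc 1 N, (1 - Real.exp (-(b j)*t))) /
        ∏ l ∈ Finset.Icc 1 M, (1 - Real.exp (-(a l)*t)) : ℝ) : ℂ) / (t:ℂ)) (Set.Ioi 0) :=
    integrable_aux N q b a hb' _ ha hcard_full (b 0) hb0 hq
  -- positivity facts
  have hfac : ∀ x t : ℝ, 0 < x → 0 < t → 0 < 1 - Real.exp (-x*t) := by
    intro x t hx ht; rw [neg_mul]; exact oneSubExp_pos (mul_pos hx ht)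
  have hDsub0 : ∀ t : ℝ, 0 < t →
      0 < ∏ l ∈ (Finset.Icc 1 M).erase i, (1 - Real.exp (-(a l)*t)) :=
    fun t ht => prod_pos fun l hl => hfac _ _ (ha' l hl) ht
  have hDfull0 : ∀ t : ℝ, 0 < t →
      0 < ∏ l ∈ Finset.Icc 1 M, (1 - Real.exp (-(a l)*t)) :=
    fun t ht => prod_pos fun l hl => hfac _ _ (ha l hl) ht
  have hP0 : ∀ t : ℝ, 0 < t →
      0 ≤ ∏ j ∈ Finset.Icc 1 N, (1 - Real.exp (-(b j)*t)) :=
    fun t ht => prod_nonneg fun j hj => (hfac _ _ (hb' j hj) ht).le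
  -- pointwise geometric sum (real)
  have hpt : ∀ t : ℝ, 0 < t → HasSum
      (fun k : ℕ => Real.exp (-(b 0 + k * a i)*t) *
        (∏ j ∈ Finset.Icc 1 N, (1 - Real.exp (-(b j)*t))) /
        ∏ l ∈ (Finset.Icc 1 M).erase i, (1 - Real.exp (-(a l)*t)))
      (Real.exp (-(b 0)*t) * (∏ j ∈ Finset.Icc 1 N, (1 - Real.exp (-(b j)*t))) /
        ∏ l ∈ Finset.Icc 1 M, (1 - Real.exp (-(a l)*t))) := by
    intro t ht
    have hr1 : Real.exp (-(a i) * t) < 1 :=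
      Real.exp_lt_one_iff.mpr (by nlinarith)
    have hr0 : (0:ℝ) ≤ Real.exp (-(a i)*t) := (Real.exp_pos _).le
    have h1r : 0 < 1 - Real.exp (-(a i)*t) := hfac _ _ hai ht
    have hfull : ∏ l ∈ Finset.Icc 1 M, (1 - Real.exp (-(a l)*t)) =
        (1 - Real.exp (-(a i)*t)) *
          ∏ l ∈ (Finset.Icc 1 M).erase i, (1 - Real.exp (-(a l)*t)) :=
      (Finset.mul_prod_erase _ _ hi).symm
    have hgeo := (hasSum_geometric_of_lt_one hr0 hr1).mul_left
      (Real.exp (-(b 0)*t) * (∏ j ∈ Finset.Icc 1 N, (1 - Real.exp (-(b j)*t))) /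
        ∏ l ∈ (Finset.Icc 1 M).erase i, (1 - Real.exp (-(a l)*t)))
    have hkey : ∀ k : ℕ,
        (Real.exp (-(b 0)*t) * (∏ j ∈ Finset.Icc 1 N, (1 - Real.exp (-(b j)*t))) /
          ∏ l ∈ (Finset.Icc 1 M).erase i, (1 - Real.exp (-(a l)*t))) *
          (Real.exp (-(a i)*t))^k
        = Real.exp (-(b 0 + k * a i)*t) *
          (∏ j ∈ Finset.Icc 1 N, (1 - Real.exp (-(b j)*t))) /
          ∏ l ∈ (Finset.Icc 1 M).erase i, (1 - Real.exp (-(a l)*t)) := by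
      intro k
      have he : Real.exp (-(b 0 + k * a i)*t) =
          Real.exp (-(b 0)*t) * (Real.exp (-(a i)*t))^k := by
        rw [← Real.exp_nat_mul, ← Real.exp_add]
        congr 1
        push_cast
        ring
      rw [he]
      ring
    have hval :
        (Real.exp (-(b 0)*t) * (∏ j ∈ Finset.Icc 1 N, (1 - Real.exp (-(b j)*t))) /
          ∏ l ∈ (Finset.Icc 1 M).erase i, (1 - Real.exp (-(a l)*t))) *
          (1 - Real.exp (-(a i)*t))⁻¹
        = Real.exp (-(b 0)*t) * (∏ j ∈ Finset.Icc 1 N, (1 - Real.exp (-(b j)*t))) /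
          ∏ l ∈ Finset.Icc 1 M, (1 - Real.exp (-(a l)*t)) := by
      rw [hfull]
      field_simp
    rw [← hval]
    exact (funext hkey : _) ▸ hgeo
  -- complex pointwise sum
  have hptC : ∀ t : ℝ, 0 < t → HasSum
      (fun k : ℕ => (Complex.exp (-(t:ℂ)*q) - 1) *
        ((Real.exp (-(b 0 + k * a i)*t) *
          (∏ j ∈ Finset.Icc 1 N, (1 - Real.exp (-(b j)*t))) /
          ∏ l ∈ (Finset.Icc 1 M).erase i, (1 - Real.exp (-(a l)*t)) : ℝ) : ℂ) / (t:ℂ))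
      ((Complex.exp (-(t:ℂ)*q) - 1) *
        ((Real.exp (-(b 0)*t) *
          (∏ j ∈ Finset.Icc 1 N, (1 - Real.exp (-(b j)*t))) /
          ∏ l ∈ Finset.Icc 1 M, (1 - Real.exp (-(a l)*t)) : ℝ) : ℂ) / (t:ℂ)) :=
    fun t ht => ((Complex.hasSum_ofReal.mpr (hpt t ht)).mul_left
      (Complex.exp (-(t:ℂ)*q) - 1)).div_const (t:ℂ)
  -- norm pointwise sum
  have hptN : ∀ t : ℝ, 0 < t → HasSum
      (fun k : ℕ => ‖(Complex.exp (-(t:ℂ)*q) - 1) *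
        ((Real.exp (-(b 0 + k * a i)*t) *
          (∏ j ∈ Finset.Icc 1 N, (1 - Real.exp (-(b j)*t))) /
          ∏ l ∈ (Finset.Icc 1 M).erase i, (1 - Real.exp (-(a l)*t)) : ℝ) : ℂ) / (t:ℂ)‖)
      ‖(Complex.exp (-(t:ℂ)*q) - 1) *
        ((Real.exp (-(b 0)*t) *
          (∏ j ∈ Finset.Icc 1 N, (1 - Real.exp (-(b j)*t))) /
          ∏ l ∈ Finset.Icc 1 M, (1 - Real.exp (-(a l)*t)) : ℝ) : ℂ) / (t:ℂ)‖ := by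
    intro t ht
    have h := ((hpt t ht).mul_left ‖Complex.exp (-(t:ℂ)*q) - 1‖).div_const t
    have e1 : ∀ k : ℕ, ‖(Complex.exp (-(t:ℂ)*q) - 1) *
        ((Real.exp (-(b 0 + k * a i)*t) *
          (∏ j ∈ Finset.Icc 1 N, (1 - Real.exp (-(b j)*t))) /
          ∏ l ∈ (Finset.Icc 1 M).erase i, (1 - Real.exp (-(a l)*t)) : ℝ) : ℂ) / (t:ℂ)‖
        = ‖Complex.exp (-(t:ℂ)*q) - 1‖ *
          (Real.exp (-(b 0 + k * a i)*t) *
            (∏ j ∈ Finset.Icc 1 N, (1 - Real.exp (-(b j)*t))) /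
            ∏ l ∈ (Finset.Icc 1 M).erase i, (1 - Real.exp (-(a l)*t))) / t := by
      intro k
      exact norm_mul_ofReal_div (div_nonneg (mul_nonneg (Real.exp_pos _).le (hP0 t ht))
        (hDsub0 t ht).le) ht
    have e2 : ‖(Complex.exp (-(t:ℂ)*q) - 1) *
        ((Real.exp (-(b 0)*t) *
          (∏ j ∈ Finset.Icc 1 N, (1 - Real.exp (-(b j)*t))) /
          ∏ l ∈ Finset.Icc 1 M, (1 - Real.exp (-(a l)*t)) : ℝ) : ℂ) / (t:ℂ)‖
        = ‖Complex.exp (-(t:ℂ)*q) - 1‖ *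
          (Real.exp (-(b 0)*t) *
            (∏ j ∈ Finset.Icc 1 N, (1 - Real.exp (-(b j)*t))) /
            ∏ l ∈ Finset.Icc 1 M, (1 - Real.exp (-(a l)*t))) / t :=
      norm_mul_ofReal_div (div_nonneg (mul_nonneg (Real.exp_pos _).le (hP0 t ht))
        (hDfull0 t ht).le) ht
    rw [e2, funext e1]
    exact h
  -- summability of the integrals of norms
  have hsum : Summable (fun k : ℕ => ∫ t in Set.Ioi (0:ℝ),
      ‖(Complex.exp (-(t:ℂ)*q) - 1) *
        ((Real.exp (-(b 0 + k * a i)*t) *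
          (∏ j ∈ Finset.Icc 1 N, (1 - Real.exp (-(b j)*t))) /
          ∏ l ∈ (Finset.Icc 1 M).erase i, (1 - Real.exp (-(a l)*t)) : ℝ) : ℂ) / (t:ℂ)‖) := by
    have hmeas : ∀ k : ℕ, AEMeasurable (fun t : ℝ =>
        (‖(Complex.exp (-(t:ℂ)*q) - 1) *
          ((Real.exp (-(b 0 + k * a i)*t) *
            (∏ j ∈ Finset.Icc 1 N, (1 - Real.exp (-(b j)*t))) /
            ∏ l ∈ (Finset.Icc 1 M).erase i, (1 - Real.exp (-(a l)*t)) : ℝ) : ℂ) / (t:ℂ)‖₊ : ℝ≥0∞))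
        (volume.restrict (Set.Ioi 0)) :=
      fun k => (hFint k).aestronglyMeasurable.enorm
    have hlt : ∑' k : ℕ, ∫⁻ t in Set.Ioi (0:ℝ),
        (‖(Complex.exp (-(t:ℂ)*q) - 1) *
          ((Real.exp (-(b 0 + k * a i)*t) *
            (∏ j ∈ Finset.Icc 1 N, (1 - Real.exp (-(b j)*t))) /
            ∏ l ∈ (Finset.Icc 1 M).erase i, (1 - Real.exp (-(a l)*t)) : ℝ) : ℂ) / (t:ℂ)‖₊ : ℝ≥0∞)
        ≠ ⊤ := by
      rw [← lintegral_tsum hmeas]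
      have heq : ∫⁻ t in Set.Ioi (0:ℝ), ∑' k : ℕ,
          (‖(Complex.exp (-(t:ℂ)*q) - 1) *
            ((Real.exp (-(b 0 + k * a i)*t) *
              (∏ j ∈ Finset.Icc 1 N, (1 - Real.exp (-(b j)*t))) /
              ∏ l ∈ (Finset.Icc 1 M).erase i, (1 - Real.exp (-(a l)*t)) : ℝ) : ℂ) / (t:ℂ)‖₊ : ℝ≥0∞)
          = ∫⁻ t in Set.Ioi (0:ℝ),
          (‖(Complex.exp (-(t:ℂ)*q) - 1) *
            ((Real.exp (-(b 0)*t) *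
              (∏ j ∈ Finset.Icc 1 N, (1 - Real.exp (-(b j)*t))) /
              ∏ l ∈ Finset.Icc 1 M, (1 - Real.exp (-(a l)*t)) : ℝ) : ℂ) / (t:ℂ)‖₊ : ℝ≥0∞) := by
        apply lintegral_congr_ae
        filter_upwards [self_mem_ae_restrict measurableSet_Ioi] with t ht
        have h := hptN t ht
        rw [← enorm_eq_nnnorm, ← ofReal_norm, ← h.tsum_eq,
          ENNReal.ofReal_tsum_of_nonneg (fun _ => norm_nonneg _) h.summable]
        simp only [ofReal_norm, enorm_eq_nnnorm]
      rw [heq]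
      exact hGint.2.ne
    have h2 := ENNReal.summable_toReal hlt
    refine Summable.congr h2 fun k => ?_
    simp only [← enorm_eq_nnnorm]
    rw [← ofReal_integral_norm_eq_lintegral_enorm (hFint k),
      ENNReal.toReal_ofReal (integral_nonneg fun t => norm_nonneg _)]
  -- conclude
  have hmain := hasSum_integral_of_summable_integral_norm hFint hsum
  have heqG : (∫ t in Set.Ioi (0:ℝ), ∑' k : ℕ,
      (Complex.exp (-(t:ℂ)*q) - 1) *
        ((Real.exp (-(b 0 + k * a i)*t) *
          (∏ j ∈ Finset.Icc 1 N, (1 - Real.exp (-(b j)*t))) /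
          ∏ l ∈ (Finset.Icc 1 M).erase i, (1 - Real.exp (-(a l)*t)) : ℝ) : ℂ) / (t:ℂ))
      = ∫ t in Set.Ioi (0:ℝ),
      (Complex.exp (-(t:ℂ)*q) - 1) *
        ((Real.exp (-(b 0)*t) *
          (∏ j ∈ Finset.Icc 1 N, (1 - Real.exp (-(b j)*t))) /
          ∏ l ∈ Finset.Icc 1 M, (1 - Real.exp (-(a l)*t)) : ℝ) : ℂ) / (t:ℂ) := by
    apply integral_congr_ae
    filter_upwards [self_mem_ae_restrict measurableSet_Ioi] with t ht
    exact (hptC t ht).tsum_eq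
  rw [heqG] at hmain
  exact hmain
end

/-- Shintani-type factorization of `η_{M,N}(q | a, b)` (stated via the
Lévy–Khinchine integral representations): with
`η_{M−1,N}(c; q) = exp(∫_0^∞ (e^{−tq}−1) e^{−ct} ∏_{j=1}^N(1−e^{−b_j t}) / ∏_{l≠i}(1−e^{−a_l t}) dt/t)`,
one has `η_{M,N}(q | a, b) = ∏_{k=0}^∞ η_{M−1,N}(b_0 + k a_i; q)`, the product converging. -/
theorem stmt7 (M N : ℕ) (hM : 1 ≤ M) (hMN : M ≤ N) (a b : ℕ → ℝ)
    (ha : ∀ l ∈ Finset.Icc 1 M, 0 < a l)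
    (hb : ∀ j ∈ Finset.Icc 0 N, 0 < b j)
    (i : ℕ) (hi : i ∈ Finset.Icc 1 M)
    (q : ℂ) (hq : -(b 0) < q.re)
    (ηsub : ℝ → ℂ)
    (hηsub : ∀ c : ℝ, ηsub c =
      Complex.exp (∫ t in Set.Ioi (0:ℝ),
        (Complex.exp (-(t : ℂ) * q) - 1) *
          ((Real.exp (-c * t) *
            (∏ j ∈ Finset.Icc 1 N, (1 - Real.exp (-(b j) * t))) /
            ∏ l ∈ (Finset.Icc 1 M).erase i, (1 - Real.exp (-(a l) * t)) : ℝ) : ℂ) / (t : ℂ))) :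
    HasProd (fun k : ℕ => ηsub (b 0 + k * a i))
      (Complex.exp (∫ t in Set.Ioi (0:ℝ),
        (Complex.exp (-(t : ℂ) * q) - 1) *
          ((Real.exp (-(b 0) * t) *
            (∏ j ∈ Finset.Icc 1 N, (1 - Real.exp (-(b j) * t))) /
            ∏ l ∈ Finset.Icc 1 M, (1 - Real.exp (-(a l) * t)) : ℝ) : ℂ) / (t : ℂ))) := by
  simp only [hηsub]
  exact (key_hasSum M N q a b hM hMN ha hb i hi hq).cexp
end

section
/- For every real τ > 0, ∫_0^∞ [ t / ( (e^{t/2} − 1)(e^{tτ/2} − 1) ) − 4t / ( (e^t − 1)(e^{tτ} − 1) ) ] dt = (4/τ) log 2. -/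
open Real MeasureTheory Set Filter Topology

noncomputable def ff (τ t : ℝ) : ℝ := t / ((Real.exp (t/2) - 1) * (Real.exp (t*τ/2) - 1))

lemma exp_sub_one_pos {x : ℝ} (hx : 0 < x) : 0 < Real.exp x - 1 :=
  sub_pos.mpr (Real.one_lt_exp_iff.mpr hx)

lemma le_exp_sub_one (x : ℝ) : x ≤ Real.exp x - 1 := by
  have := Real.add_one_le_exp x; linarith

lemma exp_sub_one_le {x : ℝ} (hx : 0 ≤ x) : Real.exp x - 1 ≤ x * Real.exp x := by
  have h := Real.add_one_le_exp (-x)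
  have hp := Real.exp_pos x
  have : Real.exp (-x) * Real.exp x = 1 := by
    rw [← Real.exp_add]; simp
  nlinarith [Real.exp_pos (-x)]

section
variable {τ : ℝ}

lemma denom_pos (hτ : 0 < τ) {t : ℝ} (ht : 0 < t) :
    0 < (Real.exp (t/2) - 1) * (Real.exp (t*τ/2) - 1) :=
  mul_pos (exp_sub_one_pos (by linarith)) (exp_sub_one_pos (by positivity))

lemma ff_pos (hτ : 0 < τ) {t : ℝ} (ht : 0 < t) : 0 < ff τ t :=
  div_pos ht (denom_pos hτ ht)

lemma ff_le (hτ : 0 < τ) {t : ℝ} (ht : 0 < t) : ff τ t ≤ 4 / (t*τ) := by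
  have h1 : t/2 ≤ Real.exp (t/2) - 1 := le_exp_sub_one _
  have h2 : t*τ/2 ≤ Real.exp (t*τ/2) - 1 := le_exp_sub_one _
  have hd : (t/2) * (t*τ/2) ≤ (Real.exp (t/2) - 1) * (Real.exp (t*τ/2) - 1) :=
    mul_le_mul h1 h2 (by positivity) (le_of_lt (exp_sub_one_pos (by linarith)))
  have h0 : (0:ℝ) < (t/2) * (t*τ/2) := by positivity
  have := div_le_div_of_nonneg_left ht.le h0 hd
  calc ff τ t ≤ t / ((t/2) * (t*τ/2)) := this
    _ = 4 / (t*τ) := by field_simp [ht.ne', hτ.ne']; ring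

lemma ff_ge (hτ : 0 < τ) {t : ℝ} (ht : 0 < t) :
    4 / (t*τ) * Real.exp (-(t*(1+τ)/2)) ≤ ff τ t := by
  have h1 : Real.exp (t/2) - 1 ≤ (t/2) * Real.exp (t/2) := exp_sub_one_le (by linarith)
  have h2 : Real.exp (t*τ/2) - 1 ≤ (t*τ/2) * Real.exp (t*τ/2) := exp_sub_one_le (by positivity)
  have hd : (Real.exp (t/2) - 1) * (Real.exp (t*τ/2) - 1) ≤
      ((t/2) * Real.exp (t/2)) * ((t*τ/2) * Real.exp (t*τ/2)) :=
    mul_le_mul h1 h2 (le_of_lt (exp_sub_one_pos (by positivity))) (by positivity)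
  have h0 : (0:ℝ) < (Real.exp (t/2) - 1) * (Real.exp (t*τ/2) - 1) := denom_pos hτ ht
  have := div_le_div_of_nonneg_left ht.le h0 hd
  calc 4 / (t*τ) * Real.exp (-(t*(1+τ)/2))
      = t / (((t/2) * Real.exp (t/2)) * ((t*τ/2) * Real.exp (t*τ/2))) := by
        rw [Real.exp_neg]
        rw [show t*(1+τ)/2 = t/2 + t*τ/2 by ring, Real.exp_add]
        field_simp [ht.ne', hτ.ne', (Real.exp_pos (t/2)).ne', (Real.exp_pos (t*τ/2)).ne']
        ring
    _ ≤ ff τ t := this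

lemma ff_contOn (hτ : 0 < τ) : ContinuousOn (ff τ) (Ioi 0) := by
  apply ContinuousOn.div
  · exact continuous_id.continuousOn
  · fun_prop
  · intro t ht
    exact (denom_pos hτ ht).ne'

lemma ff_decay (hτ : 0 < τ) {ε t : ℝ} (hε : 0 < ε) (ht : ε ≤ t) :
    ff τ t ≤ 8 / ((Real.exp (ε/4) - 1) * (Real.exp (ε*τ/2) - 1)) * Real.exp (-(8⁻¹) * t) := by
  have ht0 : 0 < t := lt_of_lt_of_le hε ht
  set K : ℝ := (Real.exp (ε/4) - 1) * (Real.exp (ε*τ/2) - 1) with hK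
  have hKpos : 0 < K := mul_pos (exp_sub_one_pos (by linarith)) (exp_sub_one_pos (by positivity))
  have e1 : Real.exp (ε/4) - 1 ≤ Real.exp (t/4) - 1 := by
    have := Real.exp_le_exp.mpr (show ε/4 ≤ t/4 by linarith); linarith
  have e2 : Real.exp (t/4) * (Real.exp (t/4) - 1) ≤ Real.exp (t/2) - 1 := by
    have h : Real.exp (t/4) * Real.exp (t/4) = Real.exp (t/2) := by
      rw [← Real.exp_add]; ring_nf
    have h1 : (1:ℝ) ≤ Real.exp (t/4) := Real.one_le_exp (by linarith)
    nlinarith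
  have e3 : Real.exp (ε*τ/2) - 1 ≤ Real.exp (t*τ/2) - 1 := by
    have := Real.exp_le_exp.mpr (show ε*τ/2 ≤ t*τ/2 by nlinarith); linarith
  have e12 : Real.exp (t/4) * (Real.exp (ε/4) - 1) ≤ Real.exp (t/2) - 1 :=
    le_trans (mul_le_mul_of_nonneg_left e1 (Real.exp_pos _).le) e2
  have hD0 : 0 < Real.exp (t/4) * K := mul_pos (Real.exp_pos _) hKpos
  have hdle : Real.exp (t/4) * K ≤ (Real.exp (t/2) - 1) * (Real.exp (t*τ/2) - 1) := by
    rw [hK, ← mul_assoc]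
    exact mul_le_mul e12 e3 (exp_sub_one_pos (by positivity)).le
      (exp_sub_one_pos (by linarith)).le
  have step1 : ff τ t ≤ t / (Real.exp (t/4) * K) :=
    div_le_div_of_nonneg_left ht0.le hD0 hdle
  have ht8 : t ≤ 8 * Real.exp (t/8) := by
    have h1 := le_exp_sub_one (t/8)
    have h2 := (Real.exp_pos (t/8)).le
    linarith
  have step2 : t / (Real.exp (t/4) * K) ≤ (8 * Real.exp (t/8)) / (Real.exp (t/4) * K) :=
    (div_le_div_iff_of_pos_right hD0).mpr ht8
  have heq : (8 * Real.exp (t/8)) / (Real.exp (t/4) * K) = 8 / K * Real.exp (-(8⁻¹) * t) := by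
    rw [show (-(8⁻¹) * t : ℝ) = t/8 - t/4 by ring, Real.exp_sub]
    field_simp
  rw [← heq]
  exact le_trans step1 step2

lemma ff_integrableOn (hτ : 0 < τ) {ε : ℝ} (hε : 0 < ε) :
    IntegrableOn (ff τ) (Ioi ε) := by
  set K : ℝ := (Real.exp (ε/4) - 1) * (Real.exp (ε*τ/2) - 1) with hK
  have hKpos : 0 < K := mul_pos (exp_sub_one_pos (by linarith)) (exp_sub_one_pos (by positivity))
  apply Integrable.mono' ((exp_neg_integrableOn_Ioi ε (show (0:ℝ) < 8⁻¹ by norm_num)).const_mul (8/K))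
  · exact ((ff_contOn hτ).mono (fun t (ht : t ∈ Ioi ε) => lt_trans hε ht)).aestronglyMeasurable
      measurableSet_Ioi
  · filter_upwards [ae_restrict_mem measurableSet_Ioi] with t ht
    rw [Real.norm_eq_abs, abs_of_pos (ff_pos hτ (lt_trans hε ht))]
    exact ff_decay hτ hε (le_of_lt ht)

noncomputable def gg (τ t : ℝ) : ℝ := ff τ t - 2 * ff τ (2*t)

lemma one_sub_exp_neg_le (y : ℝ) : 1 - Real.exp (-y) ≤ y := by
  have := Real.add_one_le_exp (-y); linarith

lemma diffA (hτ : 0 < τ) {t : ℝ} (ht : 0 < t) :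
    0 ≤ 4/(t*τ) - ff τ t ∧ 4/(t*τ) - ff τ t ≤ 2*(1+τ)/τ := by
  have hu : (0:ℝ) < 4/(t*τ) := by positivity
  have hle := ff_le hτ ht
  have hge := ff_ge hτ ht
  refine ⟨by linarith, ?_⟩
  have h1 : 4/(t*τ) - ff τ t ≤ 4/(t*τ) * (1 - Real.exp (-(t*(1+τ)/2))) := by
    have := ff_ge hτ ht; nlinarith [Real.exp_pos (-(t*(1+τ)/2))]
  have h2 : 1 - Real.exp (-(t*(1+τ)/2)) ≤ t*(1+τ)/2 := one_sub_exp_neg_le _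
  have h3 : 4/(t*τ) * (t*(1+τ)/2) = 2*(1+τ)/τ := by
    field_simp [ht.ne', hτ.ne']; ring
  calc 4/(t*τ) - ff τ t ≤ 4/(t*τ) * (1 - Real.exp (-(t*(1+τ)/2))) := h1
    _ ≤ 4/(t*τ) * (t*(1+τ)/2) := by
        apply mul_le_mul_of_nonneg_left h2 hu.le
    _ = 2*(1+τ)/τ := h3

lemma diffB (hτ : 0 < τ) {t : ℝ} (ht : 0 < t) :
    0 ≤ 4/(t*τ) - 2 * ff τ (2*t) ∧ 4/(t*τ) - 2 * ff τ (2*t) ≤ 4*(1+τ)/τ := by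
  have h2t : 0 < 2*t := by linarith
  have hle := ff_le hτ h2t
  have hge := ff_ge hτ h2t
  have heq : 4/((2*t)*τ) = 2/(t*τ) := by
    rw [show (2*t)*τ = 2*(t*τ) by ring]
    rw [show (4:ℝ) = 2*2 by norm_num]
    rw [mul_div_mul_left _ _ (two_ne_zero)]
  constructor
  · have : ff τ (2*t) ≤ 2/(t*τ) := by rw [heq] at hle; exact hle
    have h4 : (4:ℝ)/(t*τ) = 2 * (2/(t*τ)) := by ring
    linarith
  · have hgE : 2/(t*τ) * Real.exp (-(t*(1+τ))) ≤ ff τ (2*t) := by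
      have := hge
      rw [heq, show (2*t*(1+τ)/2) = t*(1+τ) by ring] at this
      exact this
    have hu : (0:ℝ) < 2/(t*τ) := by positivity
    have h1 : 4/(t*τ) - 2 * ff τ (2*t) ≤ 2 * (2/(t*τ)) * (1 - Real.exp (-(t*(1+τ)))) := by
      have h4 : (4:ℝ)/(t*τ) = 2*(2/(t*τ)) := by ring
      nlinarith [hgE]
    have h2 : 1 - Real.exp (-(t*(1+τ))) ≤ t*(1+τ) := one_sub_exp_neg_le _
    have h3 : 2 * (2/(t*τ)) * (t*(1+τ)) = 4*(1+τ)/τ := by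
      field_simp [ht.ne', hτ.ne']; ring
    calc 4/(t*τ) - 2 * ff τ (2*t) ≤ 2 * (2/(t*τ)) * (1 - Real.exp (-(t*(1+τ)))) := h1
      _ ≤ 2 * (2/(t*τ)) * (t*(1+τ)) := by
          apply mul_le_mul_of_nonneg_left h2 (by positivity)
      _ = 4*(1+τ)/τ := h3

lemma gg_bound (hτ : 0 < τ) {t : ℝ} (ht : 0 < t) : |gg τ t| ≤ 6*(1+τ)/τ := by
  obtain ⟨hA0, hA1⟩ := diffA hτ ht
  obtain ⟨hB0, hB1⟩ := diffB hτ ht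
  have : gg τ t = -(4/(t*τ) - ff τ t) + (4/(t*τ) - 2 * ff τ (2*t)) := by
    unfold gg; ring
  have hpos : (0:ℝ) ≤ (1+τ)/τ := by positivity
  have e2 : 2*(1+τ)/τ = 2*((1+τ)/τ) := by ring
  have e4 : 4*(1+τ)/τ = 4*((1+τ)/τ) := by ring
  have e6 : 6*(1+τ)/τ = 6*((1+τ)/τ) := by ring
  rw [abs_le]
  constructor <;> rw [this] <;> rw [e2] at hA1 <;> rw [e4] at hB1 <;> rw [e6] <;> linarith

lemma gg_contOn (hτ : 0 < τ) : ContinuousOn (gg τ) (Ioi 0) := by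
  have h2 : ContinuousOn (fun t => ff τ (2*t)) (Ioi 0) :=
    (ff_contOn hτ).comp (continuous_const.mul continuous_id).continuousOn
      (fun t (ht : t ∈ Ioi 0) => by simp only [mem_Ioi] at *; linarith)
  exact (ff_contOn hτ).sub (continuousOn_const.mul h2)

lemma gg_integrableOn (hτ : 0 < τ) : IntegrableOn (gg τ) (Ioi 0) := by
  have h1 : IntegrableOn (gg τ) (Ioc 0 1) := by
    apply Integrable.mono' (integrableOn_const (C := 6*(1+τ)/τ) measure_Ioc_lt_top.ne)
    · exact ((gg_contOn hτ).mono Ioc_subset_Ioi_self).aestronglyMeasurable measurableSet_Ioc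
    · filter_upwards [ae_restrict_mem measurableSet_Ioc] with t ht
      exact gg_bound hτ ht.1
  have h2 : IntegrableOn (gg τ) (Ioi 1) := by
    apply Integrable.sub (ff_integrableOn hτ one_pos)
    have := (integrableOn_Ioi_comp_mul_left_iff (ff τ) 1 two_pos).mpr
      (by rw [mul_one]; exact ff_integrableOn hτ two_pos)
    exact this.const_mul 2
  have := h1.union h2
  rwa [Ioc_union_Ioi_eq_Ioi zero_le_one] at this

lemma key_identity (hτ : 0 < τ) {ε : ℝ} (hε : 0 < ε) :
    ∫ t in Ioi ε, gg τ t = ∫ t in Ioc ε (2*ε), ff τ t := by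
  have hε2 : (0:ℝ) < 2*ε := by linarith
  have hfi : IntegrableOn (ff τ) (Ioi ε) := ff_integrableOn hτ hε
  have hfi2 : IntegrableOn (ff τ) (Ioi (2*ε)) := ff_integrableOn hτ hε2
  have h2i : IntegrableOn (fun t => ff τ (2*t)) (Ioi ε) :=
    (integrableOn_Ioi_comp_mul_left_iff (ff τ) ε two_pos).mpr hfi2
  have hsub : ∫ t in Ioi ε, gg τ t
      = (∫ t in Ioi ε, ff τ t) - 2 * ∫ t in Ioi ε, ff τ (2*t) := by
    unfold gg
    rw [integral_sub hfi (h2i.const_mul 2), integral_const_mul]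
  have hcv : ∫ t in Ioi ε, ff τ (2*t) = 2⁻¹ * ∫ t in Ioi (2*ε), ff τ t := by
    have := integral_comp_mul_left_Ioi (ff τ) ε two_pos
    rwa [smul_eq_mul] at this
  have hsplit : ∫ t in Ioi ε, ff τ t
      = (∫ t in Ioc ε (2*ε), ff τ t) + ∫ t in Ioi (2*ε), ff τ t := by
    rw [← Ioc_union_Ioi_eq_Ioi (show ε ≤ 2*ε by linarith)]
    rw [setIntegral_union (Ioc_disjoint_Ioi le_rfl) measurableSet_Ioi
      (hfi.mono_set Ioc_subset_Ioi_self) hfi2]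
  rw [hsub, hcv, hsplit]; ring

lemma inv_integrableOn (hτ : 0 < τ) {ε : ℝ} (hε : 0 < ε) (c : ℝ) :
    IntegrableOn (fun t : ℝ => c/(t*τ)) (Ioc ε (2*ε)) := by
  apply IntegrableOn.mono_set _ Ioc_subset_Icc_self
  apply ContinuousOn.integrableOn_Icc
  apply ContinuousOn.div continuousOn_const (by fun_prop)
  intro t ht
  simp only [mem_Icc] at ht
  have ht0 : 0 < t := lt_of_lt_of_le hε ht.1
  positivity

lemma int_inv (hτ : 0 < τ) {ε : ℝ} (hε : 0 < ε) :
    ∫ t in Ioc ε (2*ε), 4/(t*τ) = 4/τ * Real.log 2 := by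
  have hle : ε ≤ 2*ε := by linarith
  rw [← intervalIntegral.integral_of_le hle]
  have hrw : ∀ t : ℝ, 4/(t*τ) = (4/τ) * (1/t) := by
    intro t
    rw [mul_one_div, div_div, mul_comm t τ]
  simp only [hrw]
  rw [intervalIntegral.integral_const_mul]
  have h0 : (0:ℝ) ∉ Set.uIcc ε (2*ε) := by
    rw [Set.uIcc_of_le hle, Set.mem_Icc]
    push_neg
    intro h; linarith
  rw [integral_one_div h0]
  congr 1
  rw [mul_div_assoc, div_self hε.ne', mul_one]

lemma Ioc_upper (hτ : 0 < τ) {ε : ℝ} (hε : 0 < ε) :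
    ∫ t in Ioc ε (2*ε), ff τ t ≤ 4/τ * Real.log 2 := by
  rw [← int_inv hτ hε]
  apply setIntegral_mono_on ((ff_integrableOn hτ hε).mono_set Ioc_subset_Ioi_self)
    (inv_integrableOn hτ hε 4) measurableSet_Ioc
  intro t ht
  exact ff_le hτ (lt_trans hε ht.1)

lemma Ioc_lower (hτ : 0 < τ) {ε : ℝ} (hε : 0 < ε) :
    Real.exp (-(ε*(1+τ))) * (4/τ * Real.log 2) ≤ ∫ t in Ioc ε (2*ε), ff τ t := by
  have key : ∀ t ∈ Ioc ε (2*ε), Real.exp (-(ε*(1+τ))) * (4/(t*τ)) ≤ ff τ t := by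
    intro t ht
    have ht0 : 0 < t := lt_trans hε ht.1
    have h1 := ff_ge hτ ht0
    have h2 : Real.exp (-(ε*(1+τ))) ≤ Real.exp (-(t*(1+τ)/2)) := by
      apply Real.exp_le_exp.mpr
      have := ht.2
      nlinarith
    calc Real.exp (-(ε*(1+τ))) * (4/(t*τ)) ≤ Real.exp (-(t*(1+τ)/2)) * (4/(t*τ)) := by
          apply mul_le_mul_of_nonneg_right h2 (by positivity)
      _ = 4/(t*τ) * Real.exp (-(t*(1+τ)/2)) := by ring
      _ ≤ ff τ t := h1
  have hint : ∫ t in Ioc ε (2*ε), Real.exp (-(ε*(1+τ))) * (4/(t*τ))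
      = Real.exp (-(ε*(1+τ))) * (4/τ * Real.log 2) := by
    rw [integral_const_mul, int_inv hτ hε]
  rw [← hint]
  apply setIntegral_mono_on ((inv_integrableOn hτ hε 4).const_mul _)
    ((ff_integrableOn hτ hε).mono_set Ioc_subset_Ioi_self) measurableSet_Ioc key

end

/-- the Gaussian component of the Selberg integral distribution:
`∫_0^∞ [t/((e^{t/2}−1)(e^{tτ/2}−1)) − 4t/((e^t−1)(e^{tτ}−1))] dt = (4/τ) log 2`. -/
theorem stmt15 (τ : ℝ) (hτ : 0 < τ) :
    ∫ t in Set.Ioi (0:ℝ),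
      (t / ((Real.exp (t / 2) - 1) * (Real.exp (t * τ / 2) - 1)) -
       4 * t / ((Real.exp t - 1) * (Real.exp (t * τ) - 1))) =
    (4 / τ) * Real.log 2 := by
  have hfun : ∀ t : ℝ,
      (t / ((Real.exp (t / 2) - 1) * (Real.exp (t * τ / 2) - 1)) -
       4 * t / ((Real.exp t - 1) * (Real.exp (t * τ) - 1))) = gg τ t := by
    intro t
    unfold gg ff
    rw [show (2*t)/2 = t by ring, show 2*t*τ/2 = t*τ by ring]
    ring
  simp only [hfun]
  set L : ℝ := 4/τ * Real.log 2 with hL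
  set e : ℕ → ℝ := fun n => ((n:ℝ)+1)⁻¹ with he
  have hE : ∀ n, 0 < e n := fun n => by positivity
  set s : ℕ → Set ℝ := fun n => Ioi (e n) with hs
  have hmono : Monotone s := by
    intro m n hmn
    apply Ioi_subset_Ioi
    apply inv_anti₀ (by positivity)
    have : (m:ℝ) ≤ n := Nat.cast_le.mpr hmn
    linarith
  have hunion : (⋃ n, s n) = Ioi (0:ℝ) := by
    ext x
    simp only [hs, mem_iUnion, mem_Ioi]
    constructor
    · rintro ⟨n, hn⟩; exact lt_trans (hE n) hn
    · intro hx
      obtain ⟨n, hn⟩ := exists_nat_gt x⁻¹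
      refine ⟨n, ?_⟩
      have h1 : x⁻¹ < (n:ℝ)+1 := lt_trans hn (by linarith)
      have := (inv_strictAnti₀ (by positivity) h1)
      rwa [inv_inv] at this
  have htend1 : Tendsto (fun n => ∫ t in s n, gg τ t) atTop (𝓝 (∫ t in Ioi (0:ℝ), gg τ t)) := by
    have := tendsto_setIntegral_of_monotone (fun n => measurableSet_Ioi) hmono
      (hunion ▸ gg_integrableOn hτ)
    rwa [hunion] at this
  have hident : ∀ n, ∫ t in s n, gg τ t = ∫ t in Ioc (e n) (2*(e n)), ff τ t :=
    fun n => key_identity hτ (hE n)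
  have htend0 : Tendsto e atTop (𝓝 0) := by
    have := tendsto_one_div_add_atTop_nhds_zero_nat (𝕜 := ℝ)
    simpa [he, one_div] using this
  have hexp : Tendsto (fun n => Real.exp (-(e n*(1+τ))) * L) atTop (𝓝 L) := by
    have h1 : Tendsto (fun n => -(e n*(1+τ))) atTop (𝓝 0) := by
      have := (htend0.mul_const (1+τ)).neg
      simpa using this
    have h2 : Tendsto (fun n => Real.exp (-(e n*(1+τ)))) atTop (𝓝 1) := by
      have := (Real.continuous_exp.tendsto 0).comp h1
      simpa [Function.comp_def] using this
    have := h2.mul_const L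
    simpa using this
  have htendI : Tendsto (fun n => ∫ t in s n, gg τ t) atTop (𝓝 L) := by
    apply tendsto_of_tendsto_of_tendsto_of_le_of_le hexp tendsto_const_nhds
    · intro n
      show Real.exp (-(e n*(1+τ))) * L ≤ ∫ t in s n, gg τ t
      rw [hident n]
      exact Ioc_lower hτ (hE n)
    · intro n
      show (∫ t in s n, gg τ t) ≤ L
      rw [hident n]
      exact Ioc_upper hτ (hE n)
  exact tendsto_nhds_unique htend1 htendI
end
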